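/- For every complex number s with Re(s) > 1, L(s, λ_5) = ζ(5s) / ( ζ(s) ζ(2s) ). -/

import Mathlib

instance : Fact (Nat.Prime 5) := ⟨by norm_num⟩

/-- `λ_5(n) = (τ(n)/5)` as a complex number. -/
noncomputable def lam5 (n : ℕ) : ℂ :=
  (legendreSym 5 (n.divisors.card : ℤ) : ℂ)

open ArithmeticFunction Finset Complex LSeries
open scoped ArithmeticFunction.zeta

noncomputable def lamAF : ArithmeticFunction ℂ :=
  ⟨lam5, by simp [lam5, legendreSym.at_zero]⟩

open Classical in
noncomputable def powAF (m : ℕ) : ArithmeticFunction ℂ :=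
  ⟨fun n => if (n ≠ 0 ∧ ∃ k, k ^ m = n) then 1 else 0, by simp⟩

lemma lamAF_apply (n : ℕ) : lamAF n = lam5 n := rfl

open Classical in
lemma powAF_apply (m n : ℕ) : powAF m n = if (n ≠ 0 ∧ ∃ k, k ^ m = n) then 1 else 0 := rfl

lemma powAF_mult {m : ℕ} (hm : m ≠ 0) : (powAF m).IsMultiplicative := by
  constructor
  · rw [powAF_apply, if_pos ⟨one_ne_zero, 1, one_pow m⟩]
  · intro a b hab
    rcases eq_or_ne a 0 with rfl | ha
    · simp [powAF_apply]
    rcases eq_or_ne b 0 with rfl | hb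
    · simp [powAF_apply]
    rw [powAF_apply, powAF_apply, powAF_apply]
    have hiff : ((a * b ≠ 0 ∧ ∃ k, k ^ m = a * b)) ↔
        ((a ≠ 0 ∧ ∃ k, k ^ m = a) ∧ (b ≠ 0 ∧ ∃ k, k ^ m = b)) := by
      constructor
      · rintro ⟨-, c, hc⟩
        have hu : IsUnit (gcd a b) := (Nat.isUnit_iff.mpr hab : IsUnit (gcd a b))
        have hu' : IsUnit (gcd b a) := (Nat.isUnit_iff.mpr hab.symm : IsUnit (gcd b a))
        obtain ⟨d, hd⟩ := exists_eq_pow_of_mul_eq_pow hu hc.symm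
        obtain ⟨d', hd'⟩ := exists_eq_pow_of_mul_eq_pow hu' (by rw [mul_comm]; exact hc.symm)
        exact ⟨⟨ha, d, hd.symm⟩, ⟨hb, d', hd'.symm⟩⟩
      · rintro ⟨⟨-, c, hc⟩, ⟨-, d, hd⟩⟩
        exact ⟨mul_ne_zero ha hb, c * d, by rw [mul_pow, hc, hd]⟩
    split_ifs <;> simp_all

lemma lamAF_mult : lamAF.IsMultiplicative := by
  constructor
  · show lam5 1 = 1
    rw [lam5, Nat.divisors_one]
    norm_num
  · intro a b hab
    show lam5 (a * b) = lam5 a * lam5 b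
    rcases eq_or_ne a 0 with rfl | ha
    · simp [lam5, legendreSym.at_zero]
    rcases eq_or_ne b 0 with rfl | hb
    · simp [lam5, legendreSym.at_zero]
    rw [lam5, lam5, lam5, Nat.Coprime.card_divisors_mul hab]
    push_cast
    rw [legendreSym.mul]
    push_cast
    ring

lemma lamAF_prime_pow {p : ℕ} (hp : p.Prime) (e : ℕ) :
    lamAF (p ^ e) = ((legendreSym 5 ((e : ℤ) + 1) : ℤ) : ℂ) := by
  have : (p ^ e).divisors.card = e + 1 := by
    rw [Nat.divisors_prime_pow hp, Finset.card_map, Finset.card_range]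
  rw [lamAF_apply, lam5, this]
  push_cast
  ring_nf

lemma powAF_prime_pow {m : ℕ} (hm : m ≠ 0) {p : ℕ} (hp : p.Prime) (e : ℕ) :
    powAF m (p ^ e) = if m ∣ e then 1 else 0 := by
  rw [powAF_apply]
  have hpe : p ^ e ≠ 0 := pow_ne_zero e hp.pos.ne'
  rcases Classical.em (m ∣ e) with ⟨c, rfl⟩ | h
  · rw [if_pos ⟨hpe, p ^ c, by rw [← pow_mul, mul_comm]⟩, if_pos ⟨c, rfl⟩]
  · rw [if_neg, if_neg h]
    rintro ⟨-, k, hk⟩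
    have hk' : k ∣ p ^ e := hk ▸ dvd_pow_self k hm
    obtain ⟨t, ht, rfl⟩ := (Nat.dvd_prime_pow hp).mp hk'
    rw [← pow_mul] at hk
    exact h ⟨t, (Nat.pow_right_injective hp.two_le hk).symm.trans (mul_comm t m ▸ rfl) ⟩

lemma count2 (e : ℕ) :
    (∑ i ∈ Finset.range (e+1), if 2 ∣ i then (1:ℂ) else 0) = ((e/2 + 1 : ℕ) : ℂ) := by
  induction e with
  | zero => rw [Finset.sum_range_one]; norm_num
  | succ e ih =>
    rw [Finset.sum_range_succ, ih]
    by_cases h : 2 ∣ (e+1)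
    · rw [if_pos h]
      have : (e+1)/2 + 1 = (e/2 + 1) + 1 := by omega
      rw [this]
      push_cast
      ring
    · rw [if_neg h]
      have : (e+1)/2 + 1 = e/2 + 1 := by omega
      rw [this, add_zero]

lemma inner_prime_pow {p : ℕ} (hp : p.Prime) (e : ℕ) :
    (powAF 2 * (ζ : ArithmeticFunction ℂ)) (p ^ e) = ((e/2 + 1 : ℕ) : ℂ) := by
  rw [mul_apply, Nat.sum_divisorsAntidiagonal (fun a b => powAF 2 a * (ζ : ArithmeticFunction ℂ) b),
    Nat.sum_divisors_prime_pow hp]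
  rw [← count2 e]
  refine Finset.sum_congr rfl fun i hi => ?_
  rw [Finset.mem_range] at hi
  have hle : i ≤ e := by omega
  rw [Nat.pow_div hle hp.pos]
  have hne : p ^ (e - i) ≠ 0 := pow_ne_zero _ hp.pos.ne'
  rw [natCoe_apply, zeta_apply_ne hne]
  rw [powAF_prime_pow two_ne_zero hp i]
  push_cast
  rw [mul_one]

lemma chi_add_five (a : ℤ) : legendreSym 5 (a + 5) = legendreSym 5 a := by
  rw [legendreSym.mod 5 (a+5), legendreSym.mod 5 a]
  norm_num [Int.add_mul_emod_self_left]

lemma key : ∀ e : ℕ, (∑ j ∈ Finset.range (e+1),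
    legendreSym 5 ((e:ℤ) - j + 1) * ((j/2 : ℕ) + 1 : ℤ)) = if 5 ∣ e then 1 else 0 := by
  intro e
  induction e using Nat.strong_induction_on with
  | _ e ih =>
    rcases lt_or_ge e 5 with he | he
    · interval_cases e <;> decide
    · obtain ⟨f, rfl⟩ : ∃ f, e = f + 5 := ⟨e - 5, by omega⟩
      have hsplit : f + 5 + 1 = (f + 1) + 5 := by ring
      rw [hsplit]
      rw [Finset.sum_range_succ, Finset.sum_range_succ, Finset.sum_range_succ,
        Finset.sum_range_succ, Finset.sum_range_succ]
      have hmain : ∑ j ∈ Finset.range (f+1),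
          legendreSym 5 ((↑(f+5):ℤ) - j + 1) * ((j/2 : ℕ) + 1 : ℤ)
          = ∑ j ∈ Finset.range (f+1), legendreSym 5 ((f:ℤ) - j + 1) * ((j/2 : ℕ) + 1 : ℤ) := by
        refine Finset.sum_congr rfl fun j hj => ?_
        rw [show ((↑(f+5):ℤ) - j + 1) = ((f:ℤ) - j + 1) + 5 by push_cast; ring, chi_add_five]
      rw [hmain, ih f (by omega)]
      have h1 : ((↑(f+5):ℤ) - ↑(f+1) + 1) = 5 := by push_cast; ring
      have h2 : ((↑(f+5):ℤ) - ↑(f+2) + 1) = 4 := by push_cast; ring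
      have h3 : ((↑(f+5):ℤ) - ↑(f+3) + 1) = 3 := by push_cast; ring
      have h4 : ((↑(f+5):ℤ) - ↑(f+4) + 1) = 2 := by push_cast; ring
      have h5 : ((↑(f+5):ℤ) - ↑(f+4+1) + 1) = 1 := by push_cast; ring
      rw [h1, h2, h3, h4, h5]
      have c1 : legendreSym 5 (5:ℤ) = 0 := by decide
      have c2 : legendreSym 5 (4:ℤ) = 1 := by decide
      have c3 : legendreSym 5 (3:ℤ) = -1 := by decide
      have c4 : legendreSym 5 (2:ℤ) = -1 := by decide
      have c5 : legendreSym 5 (1:ℤ) = 1 := by decide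
      rw [c1, c2, c3, c4, c5]
      have hw : ((f+2)/2 : ℕ) + ((f+4+1)/2 : ℕ) = ((f+3)/2 : ℕ) + ((f+4)/2 : ℕ) := by omega
      have hwz : (((f+2)/2 : ℕ) : ℤ) + (((f+4+1)/2 : ℕ) : ℤ)
          = (((f+3)/2 : ℕ) : ℤ) + (((f+4)/2 : ℕ) : ℤ) := by exact_mod_cast hw
      have hdvd : (5 ∣ f + 5) ↔ (5 ∣ f) := by omega
      simp only [hdvd]
      split_ifs <;> linarith [hwz]

lemma main_identity :
    lamAF * (powAF 2 * (ζ : ArithmeticFunction ℂ)) = powAF 5 := by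
  rw [ArithmeticFunction.IsMultiplicative.eq_iff_eq_on_prime_powers _
    (lamAF_mult.mul ((powAF_mult two_ne_zero).mul (isMultiplicative_zeta.natCast))) _
    (powAF_mult (by norm_num))]
  intro p e hp
  rw [mul_apply,
    Nat.sum_divisorsAntidiagonal (fun a b => lamAF a * (powAF 2 * (ζ : ArithmeticFunction ℂ)) b),
    Nat.sum_divisors_prime_pow hp, powAF_prime_pow (by norm_num) hp e]
  have hterm : ∀ i ∈ Finset.range (e+1),
      lamAF (p ^ i) * (powAF 2 * (ζ : ArithmeticFunction ℂ)) (p ^ e / p ^ i)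
      = ((legendreSym 5 ((i:ℤ) + 1) * (((e-i)/2 : ℕ) + 1 : ℤ) : ℤ) : ℂ) := by
    intro i hi
    rw [Finset.mem_range] at hi
    rw [Nat.pow_div (by omega) hp.pos, lamAF_prime_pow hp i, inner_prime_pow hp (e - i),
      Int.cast_mul, Int.cast_add, Int.cast_one, Int.cast_natCast, Nat.cast_add, Nat.cast_one]
  rw [Finset.sum_congr rfl hterm, ← Int.cast_sum]
  have hreflect : (∑ i ∈ Finset.range (e+1),
      legendreSym 5 ((i:ℤ) + 1) * (((e-i)/2 : ℕ) + 1 : ℤ))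
      = ∑ j ∈ Finset.range (e+1),
        legendreSym 5 ((e:ℤ) - j + 1) * ((j/2 : ℕ) + 1 : ℤ) := by
    rw [← Finset.sum_range_reflect (fun j => legendreSym 5 ((e:ℤ) - j + 1) * ((j/2 : ℕ) + 1 : ℤ))
      (e+1)]
    refine Finset.sum_congr rfl fun i hi => ?_
    rw [Finset.mem_range] at hi
    have h1 : e + 1 - 1 - i = e - i := by omega
    have h2 : ((e:ℤ) - ↑(e - i) + 1) = (i:ℤ) + 1 := by
      have : ((e - i : ℕ) : ℤ) = (e:ℤ) - i := by
        rw [Nat.cast_sub (by omega)]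
      rw [this]; ring
    rw [h1, h2]
  rw [hreflect, key e]
  split_ifs <;> norm_num

lemma lam5_abs_le (n : ℕ) : ‖lam5 n‖ ≤ 1 := by
  rw [lam5, Complex.norm_intCast]
  rcases eq_or_ne (((n.divisors.card : ℤ) : ZMod 5)) 0 with h | h
  · rw [(legendreSym.eq_zero_iff 5 _).mpr h]
    norm_num
  · rcases legendreSym.eq_one_or_neg_one 5 h with h' | h' <;>
      rw [h'] <;> norm_num

lemma powAF_LSeries {m : ℕ} (hm : m ≠ 0) {s : ℂ} (hs : 1 < s.re) :
    LSeries (powAF m ·) s = riemannZeta ((m : ℂ) * s) := by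
  have hms : 1 < ((m : ℂ) * s).re := by
    have h1 : (1 : ℝ) ≤ (m : ℝ) := by exact_mod_cast Nat.one_le_iff_ne_zero.mpr hm
    have : ((m : ℂ) * s).re = (m : ℝ) * s.re := by
      simp [Complex.mul_re]
    rw [this]
    nlinarith
  rw [zeta_eq_tsum_one_div_nat_cpow hms]
  have hinj : Function.Injective fun k : ℕ => k ^ m :=
    Nat.pow_left_injective hm
  have hsupp : Function.support (term (powAF m ·) s) ⊆ Set.range (fun k : ℕ => k ^ m) := by
    intro n hn
    rcases eq_or_ne n 0 with rfl | hn0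
    · exact absurd (term_zero _ _) hn
    rw [Function.mem_support, term_of_ne_zero hn0] at hn
    have hpw : powAF m n ≠ 0 := by
      intro h
      rw [h] at hn
      simp at hn
    rw [powAF_apply] at hpw
    by_cases hc : n ≠ 0 ∧ ∃ k, k ^ m = n
    · obtain ⟨-, k, hk⟩ := hc
      exact ⟨k, hk⟩
    · rw [if_neg hc] at hpw
      exact absurd rfl hpw
  rw [LSeries, ← Function.Injective.tsum_eq hinj hsupp]
  refine tsum_congr fun k => ?_
  rcases eq_or_ne k 0 with rfl | hk
  · rw [zero_pow hm, term_zero, Nat.cast_zero,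
      zero_cpow (by intro h; rw [h] at hms; norm_num at hms), div_zero]
  · have hkm : k ^ m ≠ 0 := pow_ne_zero m hk
    rw [term_of_ne_zero hkm, powAF_apply, if_pos ⟨hkm, k, rfl⟩, Nat.cast_pow,
      ← Complex.natCast_cpow_natCast_mul]

theorem dirichlet_series_lam5 (s : ℂ) (hs : 1 < s.re) :
    LSeries lam5 s = riemannZeta (5 * s) / (riemannZeta s * riemannZeta (2 * s)) := by
  have hsum_lam : LSeriesSummable (lamAF ·) s :=
    LSeriesSummable_of_bounded_of_one_lt_re (fun n _ => lam5_abs_le n) hs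
  have hsum_pow2 : LSeriesSummable (powAF 2 ·) s := by
    refine LSeriesSummable_of_bounded_of_one_lt_re (m := 1) (fun n _ => ?_) hs
    rw [powAF_apply]
    split_ifs <;> norm_num
  have hsum_zeta : LSeriesSummable ((ζ : ArithmeticFunction ℂ) ·) s := by
    refine LSeriesSummable_of_bounded_of_one_lt_re (m := 1) (fun n hn => ?_) hs
    rw [natCoe_apply, zeta_apply_ne hn]
    norm_num
  have h1 : LSeries (powAF 5 ·) s = LSeries (lamAF ·) s *
      (LSeries (powAF 2 ·) s * LSeries ((ζ : ArithmeticFunction ℂ) ·) s) := by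
    rw [← LSeries_mul' hsum_pow2 hsum_zeta,
      ← LSeries_mul' hsum_lam (LSeriesSummable_mul hsum_pow2 hsum_zeta),
      main_identity]
  have hz2 : LSeries ((ζ : ArithmeticFunction ℂ) ·) s = riemannZeta s := by
    rw [← LSeries_zeta_eq_riemannZeta hs]
    refine LSeries_congr (fun {n} hn => ?_) s
    rw [natCoe_apply]
  have hp5 : LSeries (powAF 5 ·) s = riemannZeta (5 * s) := by
    rw [powAF_LSeries (by norm_num) hs]
    norm_num
  have hp2 : LSeries (powAF 2 ·) s = riemannZeta (2 * s) := by
    rw [powAF_LSeries (by norm_num) hs]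
    norm_num
  have hlam : LSeries (lamAF ·) s = LSeries lam5 s := LSeries_congr (fun {n} _ => rfl) s
  rw [hp5, hp2, hz2, hlam] at h1
  have hzs : riemannZeta s ≠ 0 := riemannZeta_ne_zero_of_one_lt_re hs
  have hz2s : riemannZeta (2 * s) ≠ 0 := by
    refine riemannZeta_ne_zero_of_one_lt_re ?_
    have : (2 * s).re = 2 * s.re := by simp [Complex.mul_re]
    rw [this]; linarith
  rw [eq_div_iff (mul_ne_zero hzs hz2s)]
  linear_combination -h1
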